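/- arXiv:2009.10693 — 4 statements merged into one kernel-verified Lean document; each statement's English description precedes it below -/
import Mathlib

section
/- Let N_G, N_R be positive integers, and let ζ_G, ζ_R be positive reals such that 1 − ζ_G and 1 − ζ_R are both strictly positive or both strictly negative. Then N_G(1 − ζ_G) + N_R(1 − ζ_R) ≠ 1 − ζ_G^{N_G}·ζ_R^{N_R}. -/
theorem stmt_4 (NG NR : ℕ) (hNG : 0 < NG) (hNR : 0 < NR)
    (ζG ζR : ℝ) (hζG : 0 < ζG) (hζR : 0 < ζR)
    (hsign : (0 < 1 - ζG ∧ 0 < 1 - ζR) ∨ (1 - ζG < 0 ∧ 1 - ζR < 0)) :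
    (NG : ℝ) * (1 - ζG) + (NR : ℝ) * (1 - ζR) ≠ 1 - ζG ^ NG * ζR ^ NR := by
  have hG : 1 + (NG : ℝ) * (ζG - 1) ≤ ζG ^ NG := by
    have := one_add_mul_le_pow (by linarith : (-2:ℝ) ≤ ζG - 1) NG
    simpa using this
  have hR : 1 + (NR : ℝ) * (ζR - 1) ≤ ζR ^ NR := by
    have := one_add_mul_le_pow (by linarith : (-2:ℝ) ≤ ζR - 1) NR
    simpa using this
  have pGpos : 0 < ζG ^ NG := pow_pos hζG NG
  have pRpos : 0 < ζR ^ NR := pow_pos hζR NR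
  have hNG' : (1:ℝ) ≤ NG := by exact_mod_cast hNG
  have hNR' : (1:ℝ) ≤ NR := by exact_mod_cast hNR
  have key : 1 - ζG ^ NG * ζR ^ NR <
      (NG : ℝ) * (1 - ζG) + (NR : ℝ) * (1 - ζR) := by
    rcases hsign with ⟨h1, h2⟩ | ⟨h1, h2⟩
    · have hA : 0 < (NG : ℝ) * (1 - ζG) := by nlinarith
      have hB : 0 < (NR : ℝ) * (1 - ζR) := by nlinarith
      rcases le_or_gt (1 - (NG : ℝ) * (1 - ζG) - (NR : ℝ) * (1 - ζR)) 0 with h | h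
      · nlinarith [mul_pos pGpos pRpos]
      · have hB' : (0:ℝ) ≤ 1 + (NR : ℝ) * (ζR - 1) := by nlinarith
        have := mul_le_mul hG hR hB' (le_of_lt pGpos)
        nlinarith [mul_pos hA hB]
    · have hA : 0 < (NG : ℝ) * (ζG - 1) := by nlinarith
      have hB : 0 < (NR : ℝ) * (ζR - 1) := by nlinarith
      have := mul_le_mul hG hR (by nlinarith) (le_of_lt pGpos)
      nlinarith [mul_pos hA hB]
  exact ne_of_gt key
end

section
/- Let N be even and r = 1, 0 ≤ σ < 1. Then the expression ρ(σ) = r(r−1)/[(r²−σ²)(1 − ((1−σ²)/(r²−σ²))^{N/2})], interpreted as its limit as r → 1, equals 1/N independently of σ. -/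
theorem stmt_8 (N : ℕ) (hN : 0 < N) (hNeven : Even N) (σ : ℝ) (hσ0 : 0 ≤ σ) (hσ1 : σ < 1) :
    Filter.Tendsto
      (fun r : ℝ => r * (r - 1) /
        ((r ^ 2 - σ ^ 2) * (1 - ((1 - σ ^ 2) / (r ^ 2 - σ ^ 2)) ^ (N / 2))))
      (nhdsWithin 1 {1}ᶜ) (nhds (1 / (N : ℝ))) := by
  have hσ2 : σ ^ 2 < 1 := by nlinarith
  have ha0 : (0:ℝ) < 1 - σ ^ 2 := by linarith
  obtain ⟨m, hm⟩ := hNeven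
  have hmN : N / 2 = m := by omega
  have hm0 : 0 < m := by omega
  set S : ℝ → ℝ := fun r => ∑ i ∈ Finset.range m, (r ^ 2 - σ ^ 2) ^ i * (1 - σ ^ 2) ^ (m - 1 - i)
    with hS
  set g : ℝ → ℝ := fun r => r * (r ^ 2 - σ ^ 2) ^ (m - 1) / ((r + 1) * S r) with hg
  have hS1 : S 1 = m * (1 - σ ^ 2) ^ (m - 1) := by
    simp only [hS]
    have hc : ∀ i ∈ Finset.range m,
        ((1:ℝ) ^ 2 - σ ^ 2) ^ i * (1 - σ ^ 2) ^ (m - 1 - i) = (1 - σ ^ 2) ^ (m - 1) := by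
      intro i hi
      simp only [Finset.mem_range] at hi
      rw [one_pow, ← pow_add]
      congr 1
      omega
    rw [Finset.sum_congr rfl hc, Finset.sum_const, Finset.card_range, nsmul_eq_mul]
  have hden1 : ((1:ℝ) + 1) * S 1 ≠ 0 := by
    rw [hS1]
    positivity
  have hg1 : g 1 = 1 / (N : ℝ) := by
    simp only [hg, hS1, one_pow]
    have hNr : (N : ℝ) = 2 * m := by push_cast [hm]; ring
    rw [hNr]
    have hak : ((1:ℝ) - σ ^ 2) ^ (m - 1) ≠ 0 := by positivity
    have hmr : (m : ℝ) ≠ 0 := by positivity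
    field_simp
    ring
  have hgt : Filter.Tendsto g (nhds 1) (nhds (1 / (N : ℝ))) := by
    rw [← hg1]
    apply Filter.Tendsto.div
    · exact Continuous.tendsto (by fun_prop) 1
    · apply Continuous.tendsto
      apply Continuous.mul (by fun_prop)
      exact continuous_finset_sum _ (fun i _ => by fun_prop)
    · exact hden1
  have hev : (fun r : ℝ => r * (r - 1) /
        ((r ^ 2 - σ ^ 2) * (1 - ((1 - σ ^ 2) / (r ^ 2 - σ ^ 2)) ^ (N / 2))))
      =ᶠ[nhdsWithin 1 {1}ᶜ] g := by
    have hopen : {r : ℝ | σ < r} ∈ nhds (1:ℝ) := by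
      exact IsOpen.mem_nhds (isOpen_lt continuous_const continuous_id) (by simpa using hσ1)
    filter_upwards [nhdsWithin_le_nhds hopen, self_mem_nhdsWithin] with r hr hr1
    have hr1 : r ≠ 1 := hr1
    have hrpos : 0 < r := lt_of_le_of_lt hσ0 hr
    have hc : 0 < r ^ 2 - σ ^ 2 := by nlinarith
    have hr1' : r - 1 ≠ 0 := sub_ne_zero.mpr hr1
    have hrp1 : r + 1 ≠ 0 := by positivity
    have hSpos : 0 < S r := by
      apply Finset.sum_pos
      · intro i _
        positivity
      · exact ⟨0, Finset.mem_range.mpr hm0⟩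
    have hkey : (r ^ 2 - σ ^ 2) ^ m - (1 - σ ^ 2) ^ m = S r * ((r - 1) * (r + 1)) := by
      rw [show (r - 1) * (r + 1) = (r ^ 2 - σ ^ 2) - (1 - σ ^ 2) by ring]
      exact (geom_sum₂_mul _ _ m).symm
    have hpow : (r ^ 2 - σ ^ 2) ^ m = (r ^ 2 - σ ^ 2) * (r ^ 2 - σ ^ 2) ^ (m - 1) := by
      conv_lhs => rw [show m = (m - 1) + 1 by omega]
      ring
    simp only [hg, hmN]
    rw [div_pow]
    rw [show (1:ℝ) - (1 - σ ^ 2) ^ m / (r ^ 2 - σ ^ 2) ^ m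
        = ((r ^ 2 - σ ^ 2) ^ m - (1 - σ ^ 2) ^ m) / (r ^ 2 - σ ^ 2) ^ m by
      field_simp]
    rw [hkey, hpow]
    field_simp
  exact (hgt.mono_left nhdsWithin_le_nhds).congr' hev.symm
end

section
/- Let a_G, a_R, b_G, b_R, k_G, k_R > 0 with a_G·a_R > b_G·b_R, and let ζ_G, ζ_R be defined as in the bithermal formula. Then for N_G, N_R ≥ 1, the quantity ρ_A = (1 − (N_G ζ_G + N_R ζ_R)/(N_G+N_R)) / (1 − ζ_G^{N_G} ζ_R^{N_R}) satisfies ρ_A > 1/(N_G+N_R). -/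
lemma stmt_9_aux (x y : ℝ) (hx0 : 0 < x) (hx1 : x < 1) (hy0 : 0 < y) (hy1 : y < 1)
    (NG NR : ℕ) (hNG : 1 ≤ NG) (hNR : 1 ≤ NR) :
    (1 - ((NG : ℝ) * x + (NR : ℝ) * y) / ((NG : ℝ) + (NR : ℝ))) /
      (1 - x ^ NG * y ^ NR) > 1 / ((NG : ℝ) + (NR : ℝ)) := by
  have hNG' : (1:ℝ) ≤ (NG:ℝ) := by exact_mod_cast hNG
  have hNR' : (1:ℝ) ≤ (NR:ℝ) := by exact_mod_cast hNR
  have hN : (0:ℝ) < (NG:ℝ) + (NR:ℝ) := by linarith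
  have hxNG : x ^ NG < 1 := pow_lt_one₀ hx0.le hx1 (by omega)
  have hyNR : y ^ NR < 1 := pow_lt_one₀ hy0.le hy1 (by omega)
  have hxp : 0 < x ^ NG := pow_pos hx0 NG
  have hyp : 0 < y ^ NR := pow_pos hy0 NR
  have hB : 0 < 1 - x ^ NG * y ^ NR := by nlinarith
  have bern1 : 1 - x ^ NG ≤ (NG:ℝ) * (1 - x) := by
    have h := one_add_mul_le_pow (a := x - 1) (by linarith) NG
    have h2 : (1 + (x - 1)) ^ NG = x ^ NG := by ring_nf
    rw [h2] at h
    nlinarith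
  have bern2 : 1 - y ^ NR ≤ (NR:ℝ) * (1 - y) := by
    have h := one_add_mul_le_pow (a := y - 1) (by linarith) NR
    have h2 : (1 + (y - 1)) ^ NR = y ^ NR := by ring_nf
    rw [h2] at h
    nlinarith
  have key : 1 - x ^ NG * y ^ NR < (NG:ℝ) * (1 - x) + (NR:ℝ) * (1 - y) := by
    have h1 : 1 - x ^ NG * y ^ NR < (1 - x ^ NG) + (1 - y ^ NR) := by nlinarith
    linarith
  rw [gt_iff_lt, div_lt_div_iff₀ hN hB]
  have hrw : (1 - ((NG:ℝ) * x + (NR:ℝ) * y) / ((NG:ℝ) + (NR:ℝ))) * ((NG:ℝ) + (NR:ℝ))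
      = (NG:ℝ) * (1 - x) + (NR:ℝ) * (1 - y) := by
    field_simp
    ring
  rw [hrw]
  linarith

theorem stmt_9 (aG aR bG bR kG kR : ℝ)
    (haG : 0 < aG) (haR : 0 < aR) (hbG : 0 < bG) (hbR : 0 < bR)
    (hkG : 0 < kG) (hkR : 0 < kR) (hadv : bG * bR < aG * aR)
    (NG NR : ℕ) (hNG : 1 ≤ NG) (hNR : 1 ≤ NR) :
    let ζG := bR * (aR * kG + bG * kR) / (aR * (aG * kR + bR * kG))
    let ζR := bG * (aG * kR + bR * kG) / (aG * (aR * kG + bG * kR))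
    (1 - ((NG : ℝ) * ζG + (NR : ℝ) * ζR) / ((NG : ℝ) + (NR : ℝ))) /
      (1 - ζG ^ NG * ζR ^ NR) > 1 / ((NG : ℝ) + (NR : ℝ)) := by
  intro ζG ζR
  have hx0 : 0 < ζG := by
    show 0 < bR * (aR * kG + bG * kR) / (aR * (aG * kR + bR * kG))
    positivity
  have hy0 : 0 < ζR := by
    show 0 < bG * (aG * kR + bR * kG) / (aG * (aR * kG + bG * kR))
    positivity
  have hx1 : ζG < 1 := by
    show bR * (aR * kG + bG * kR) / (aR * (aG * kR + bR * kG)) < 1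
    rw [div_lt_one (by positivity)]
    nlinarith
  have hy1 : ζR < 1 := by
    show bG * (aG * kR + bR * kG) / (aG * (aR * kG + bG * kR)) < 1
    rw [div_lt_one (by positivity)]
    nlinarith
  exact stmt_9_aux ζG ζR hx0 hx1 hy0 hy1 NG NR hNG hNR
end

section
/- Let a_G, a_R, b_G, b_R, k_G, k_R > 0 with a_G·a_R < b_G·b_R. Then with ζ_G, ζ_R as in the bithermal formula, ρ_A = (1 − (N_G ζ_G + N_R ζ_R)/(N_G+N_R)) / (1 − ζ_G^{N_G} ζ_R^{N_R}) < 1/(N_G+N_R) for all positive integers N_G, N_R. -/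
theorem stmt_10 (aG aR bG bR kG kR : ℝ)
    (haG : 0 < aG) (haR : 0 < aR) (hbG : 0 < bG) (hbR : 0 < bR)
    (hkG : 0 < kG) (hkR : 0 < kR) (hdis : aG * aR < bG * bR)
    (NG NR : ℕ) (hNG : 0 < NG) (hNR : 0 < NR) :
    let ζG := bR * (aR * kG + bG * kR) / (aR * (aG * kR + bR * kG))
    let ζR := bG * (aG * kR + bR * kG) / (aG * (aR * kG + bG * kR))
    (1 - ((NG : ℝ) * ζG + (NR : ℝ) * ζR) / ((NG : ℝ) + (NR : ℝ))) /
      (1 - ζG ^ NG * ζR ^ NR) < 1 / ((NG : ℝ) + (NR : ℝ)) := by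
  intro ζG ζR
  have hdG : 0 < aR * (aG * kR + bR * kG) := by positivity
  have hdR : 0 < aG * (aR * kG + bG * kR) := by positivity
  have hx : 1 < ζG := by
    rw [show ζG = bR * (aR * kG + bG * kR) / (aR * (aG * kR + bR * kG)) from rfl,
      lt_div_iff₀ hdG]
    nlinarith
  have hy : 1 < ζR := by
    rw [show ζR = bG * (aG * kR + bR * kG) / (aG * (aR * kG + bG * kR)) from rfl,
      lt_div_iff₀ hdR]
    nlinarith
  have hA : 1 < ζG ^ NG := one_lt_pow₀ hx hNG.ne'
  have hB : 1 < ζR ^ NR := one_lt_pow₀ hy hNR.ne'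
  have hAB : 0 < (ζG ^ NG - 1) * (ζR ^ NR - 1) := by nlinarith
  have h1 : 1 + (NG : ℝ) * (ζG - 1) ≤ ζG ^ NG := by
    have := one_add_mul_le_pow (by linarith : (-2 : ℝ) ≤ ζG - 1) NG
    simpa using this
  have h2 : 1 + (NR : ℝ) * (ζR - 1) ≤ ζR ^ NR := by
    have := one_add_mul_le_pow (by linarith : (-2 : ℝ) ≤ ζR - 1) NR
    simpa using this
  have hkey : (NG : ℝ) * ζG + (NR : ℝ) * ζR - ((NG : ℝ) + (NR : ℝ)) <
      ζG ^ NG * ζR ^ NR - 1 := by nlinarith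
  have hN : 0 < (NG : ℝ) + (NR : ℝ) := by positivity
  have hP : 1 - ζG ^ NG * ζR ^ NR < 0 := by nlinarith
  have hrw : 1 - ((NG : ℝ) * ζG + (NR : ℝ) * ζR) / ((NG : ℝ) + (NR : ℝ)) =
      (((NG : ℝ) + (NR : ℝ)) - ((NG : ℝ) * ζG + (NR : ℝ) * ζR)) / ((NG : ℝ) + (NR : ℝ)) := by
    field_simp
  rw [hrw, div_div, div_lt_iff_of_neg (by nlinarith : ((NG : ℝ) + (NR : ℝ)) * (1 - ζG ^ NG * ζR ^ NR) < 0)]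
  have : 1 / ((NG : ℝ) + (NR : ℝ)) * (((NG : ℝ) + (NR : ℝ)) * (1 - ζG ^ NG * ζR ^ NR)) =
      1 - ζG ^ NG * ζR ^ NR := by field_simp
  rw [this]
  linarith
end
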